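/- Fix constants γ > 0, c > 0 and 0 < ζ < 1/2. There exists a constant C = C(γ, c, ζ) > 0 such that for every natural number N ≥ 2, setting h = 1/N, R = ⌈h^{-ζ}⌉ and taking the uniform weights J(j) = c for 1 ≤ j ≤ R, the discrete eigenvalues λ_k^h = (4γ/(h²R³)) · ∑_{j=1}^{R} c·sin²(π·k·h·j/2) are strictly positive for every 1 ≤ k ≤ N and satisfy ∑_{k=1}^{N} (λ_k^h)^{-1} ≤ C. (This is the uniform boundedness of the sum of inverse eigenvalues of the long-range discrete operator, Lemma 2.1 of the paper.) -/

import Mathlib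

set_option maxHeartbeats 1000000

open Real Finset


lemma sumSqCube (m : ℕ) : (m:ℝ)^3 ≤ 3 * ∑ j ∈ Finset.Icc 1 m, (j:ℝ)^2 := by
  induction m with
  | zero => simp
  | succ m ih =>
      rw [Finset.sum_Icc_succ_top (by omega)]
      push_cast
      nlinarith [ih, Nat.cast_nonneg (α := ℝ) m]

lemma baselBound : ∀ N : ℕ, 1 ≤ N → ∑ k ∈ Finset.Icc 1 N, ((k:ℝ)^2)⁻¹ ≤ 2 - 1/(N:ℝ) := by
  intro N hN
  induction N, hN using Nat.le_induction with
  | base => norm_num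
  | succ N hN ih =>
      rw [Finset.sum_Icc_succ_top (by omega)]
      have hN0 : (0:ℝ) < N := by positivity
      have h2 : 1/(N:ℝ) - 1/((N:ℝ)+1) = ((N:ℝ)*((N:ℝ)+1))⁻¹ := by
        field_simp
        ring
      have h1 : (((N:ℝ)+1)^2)⁻¹ ≤ 1/(N:ℝ) - 1/((N:ℝ)+1) := by
        rw [h2]
        apply inv_anti₀ (by positivity) (by nlinarith)
      push_cast
      linarith [ih]


lemma absSumCos (θ : ℝ) (hθ : 0 < Real.sin θ) (R : ℕ) :
    |∑ j ∈ Finset.Icc 1 R, Real.cos (2 * θ * j)| ≤ 1 / Real.sin θ := by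
  set z : ℂ := Complex.exp ((2*θ : ℝ) * Complex.I) with hzdef
  have habs : ‖z‖ = 1 := Complex.norm_exp_ofReal_mul_I (2*θ)
  have hre : z.re = Real.cos (2*θ) := Complex.exp_ofReal_mul_I_re (2*θ)
  have him : z.im = Real.sin (2*θ) := Complex.exp_ofReal_mul_I_im (2*θ)
  have habs1 : ‖z - 1‖ ^ 2 = (2 * Real.sin θ)^2 := by
    rw [Complex.sq_norm, Complex.normSq_apply]
    simp only [Complex.sub_re, Complex.sub_im, Complex.one_re, Complex.one_im, hre, him]
    nlinarith [Real.sin_sq_add_cos_sq (2*θ), Real.cos_two_mul θ, Real.sin_sq_add_cos_sq θ]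
  have habs2 : ‖z - 1‖ = 2 * Real.sin θ := by
    have h0 : (0:ℝ) ≤ ‖z-1‖ := norm_nonneg _
    nlinarith [habs1]
  have hz1 : z ≠ 1 := by
    intro h
    rw [h] at habs2
    simp at habs2
    linarith
  have hsum : ∑ j ∈ Finset.Icc 1 R, z^j = z * ((z^R - 1)/(z - 1)) := by
    rw [← Finset.Ico_add_one_right_eq_Icc, Finset.sum_Ico_eq_sum_range]
    simp only [Nat.add_sub_cancel, Nat.succ_sub_one, pow_add, pow_one]
    rw [← Finset.mul_sum, geom_sum_eq hz1]
  have hcos : ∀ j : ℕ, Real.cos (2 * θ * j) = (z^j).re := by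
    intro j
    rw [hzdef, ← Complex.exp_nat_mul]
    have h5 : (j:ℂ) * (((2*θ:ℝ):ℂ) * Complex.I) = ((2*θ*j : ℝ):ℂ) * Complex.I := by
      push_cast; ring
    rw [h5, Complex.exp_ofReal_mul_I_re]
  calc |∑ j ∈ Finset.Icc 1 R, Real.cos (2 * θ * j)|
      = |(∑ j ∈ Finset.Icc 1 R, z^j).re| := by
        rw [Complex.re_sum]
        congr 1
        exact Finset.sum_congr rfl fun j _ => hcos j
    _ ≤ ‖∑ j ∈ Finset.Icc 1 R, z^j‖ := Complex.abs_re_le_norm _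
    _ = ‖z‖ * (‖z^R - 1‖ / ‖z - 1‖) := by
        rw [hsum, norm_mul, norm_div]
    _ ≤ 1 * (2 / (2 * Real.sin θ)) := by
        rw [habs, habs2]
        gcongr
        calc ‖z^R - 1‖ ≤ ‖z^R‖ + 1 := by
              simpa using norm_sub_le (z^R) 1
          _ ≤ 2 := by rw [norm_pow, habs]; norm_num
    _ = 1 / Real.sin θ := by
        rw [one_mul]
        field_simp

lemma sumSinSqLarge (x : ℝ) (R : ℕ) (hx0 : 0 < x) (hx1 : x ≤ 1) (hxR : 2 ≤ x * R) :
    (R:ℝ)/4 ≤ ∑ j ∈ Finset.Icc 1 R, Real.sin (π * x * j / 2)^2 := by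
  set θ : ℝ := π * x / 2 with hθdef
  have hπ := Real.pi_pos
  have hθ0 : 0 < θ := by positivity
  have hθle : θ ≤ π/2 := by rw [hθdef]; nlinarith
  have hsθ : 0 < Real.sin θ := Real.sin_pos_of_pos_of_lt_pi hθ0 (by linarith)
  have hsx : x ≤ Real.sin θ := by
    have := Real.mul_le_sin hθ0.le hθle
    calc x = 2/π * θ := by rw [hθdef]; field_simp
      _ ≤ Real.sin θ := this
  have hR0 : 0 < (R:ℝ) := by
    rcases Nat.eq_zero_or_pos R with h | h
    · exfalso; rw [h] at hxR; simp at hxR; linarith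
    · exact_mod_cast h
  have hrw : ∀ j : ℕ, Real.sin (π * x * j / 2)^2 = 1/2 - Real.cos (2 * θ * j)/2 := by
    intro j
    rw [Real.sin_sq_eq_half_sub]
    congr 2
    rw [hθdef]; ring
  rw [Finset.sum_congr rfl fun j _ => hrw j, Finset.sum_sub_distrib, Finset.sum_const,
    Nat.card_Icc]
  have hbound := absSumCos θ hsθ R
  have h1 : 1 / Real.sin θ ≤ (R:ℝ)/2 := by
    rw [div_le_div_iff₀ hsθ (by norm_num)]
    nlinarith
  have h2 : ∑ j ∈ Finset.Icc 1 R, Real.cos (2 * θ * j) ≤ (R:ℝ)/2 := by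
    have := le_abs_self (∑ j ∈ Finset.Icc 1 R, Real.cos (2 * θ * j))
    linarith [hbound.trans h1]
  have hcard : ((R + 1 - 1 : ℕ) : ℝ) = (R:ℝ) := by simp
  rw [nsmul_eq_mul, hcard]
  rw [← Finset.sum_div]
  linarith

lemma sumSinSqSmall (x : ℝ) (R m : ℕ) (hx0 : 0 < x) (hm1 : 1 ≤ m) (hmR : m ≤ R)
    (hj : ∀ j : ℕ, j ≤ m → x * j ≤ 1) :
    x^2 * (m:ℝ)^3 / 3 ≤ ∑ j ∈ Finset.Icc 1 R, Real.sin (π * x * j / 2)^2 := by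
  have hπ := Real.pi_pos
  have step1 : ∀ j ∈ Finset.Icc 1 m, (x * j)^2 ≤ Real.sin (π * x * j / 2)^2 := by
    intro j hjm
    simp only [Finset.mem_Icc] at hjm
    have hxj0 : 0 ≤ x * j := by positivity
    have hxj1 : x * j ≤ 1 := hj j hjm.2
    have hθ0 : (0:ℝ) ≤ π * x * j / 2 := by positivity
    have hθle : π * x * j / 2 ≤ π / 2 := by nlinarith
    have := Real.mul_le_sin hθ0 hθle
    have h6 : x * j ≤ Real.sin (π * x * j / 2) := by
      calc x * j = 2/π * (π * x * j / 2) := by field_simp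
        _ ≤ _ := this
    exact pow_le_pow_left₀ hxj0 h6 2
  calc x^2 * (m:ℝ)^3 / 3 ≤ x^2 * ∑ j ∈ Finset.Icc 1 m, (j:ℝ)^2 := by
        have := sumSqCube m
        nlinarith [sq_nonneg x]
    _ = ∑ j ∈ Finset.Icc 1 m, (x * j)^2 := by
        rw [Finset.mul_sum]
        exact Finset.sum_congr rfl fun j _ => by ring
    _ ≤ ∑ j ∈ Finset.Icc 1 m, Real.sin (π * x * j / 2)^2 := Finset.sum_le_sum step1
    _ ≤ ∑ j ∈ Finset.Icc 1 R, Real.sin (π * x * j / 2)^2 := by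
        apply Finset.sum_le_sum_of_subset_of_nonneg (Finset.Icc_subset_Icc_right hmR)
        intro j _ _
        positivity

/-- **Uniform boundedness of the sum of inverse eigenvalues** (Lemma 2.1).
For fixed `γ, c > 0` and `0 < ζ < 1/2`, there is a constant `C` such that for every `N ≥ 2`,
with `h = 1/N`, `R = ⌈h^{-ζ}⌉` and uniform weights `J(j) = c`, the discrete eigenvalues
`λ_k^h = (4γ/(h²R³)) ∑_{j=1}^R c sin²(πkhj/2)` are positive for `1 ≤ k ≤ N` and
`∑_{k=1}^N (λ_k^h)⁻¹ ≤ C`. -/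
theorem sum_inv_eigenvalues_bounded
    (γ c ζ : ℝ) (hγ : 0 < γ) (hc : 0 < c) (hζ0 : 0 < ζ) (hζ : ζ < 1 / 2) :
    ∃ C : ℝ, 0 < C ∧
      ∀ N : ℕ, 2 ≤ N →
        ∀ h : ℝ, h = 1 / (N : ℝ) →
          ∀ R : ℕ, R = ⌈h ^ (-ζ)⌉₊ →
            (∀ k : ℕ, 1 ≤ k → k ≤ N →
              0 < (4 * γ / (h ^ 2 * (R : ℝ) ^ 3)) *
                    ∑ j ∈ Finset.Icc 1 R, c * Real.sin (π * k * h * j / 2) ^ 2) ∧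
            ∑ k ∈ Finset.Icc 1 N,
              ((4 * γ / (h ^ 2 * (R : ℝ) ^ 3)) *
                  ∑ j ∈ Finset.Icc 1 R, c * Real.sin (π * k * h * j / 2) ^ 2)⁻¹ ≤ C := by
  refine ⟨100 / (γ * c), by positivity, ?_⟩
  intro N hN h hh R hR
  have hN2 : (2:ℝ) ≤ (N:ℝ) := by exact_mod_cast hN
  have hN0 : (0:ℝ) < N := by linarith
  have hN1 : (1:ℝ) ≤ N := by linarith
  subst hh
  -- value of h^(-ζ)
  have hval : (1/(N:ℝ)) ^ (-ζ) = (N:ℝ) ^ ζ := by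
    rw [Real.rpow_neg (by positivity), one_div, Real.inv_rpow (by positivity), inv_inv]
  have hNζ : 1 < (N:ℝ)^ζ := by
    rw [Real.one_lt_rpow_iff_of_pos hN0]
    left; exact ⟨by linarith, hζ0⟩
  have hR2 : 2 ≤ R := by
    have : 1 < R := by
      rw [hR, hval, Nat.lt_ceil]
      exact_mod_cast hNζ
    omega
  have hR0 : (0:ℝ) < R := by
    have : (0:ℕ) < R := by omega
    exact_mod_cast this
  have hRub : (R:ℝ) ≤ 2 * (N:ℝ)^ζ := by
    rw [hR, hval]
    have := Nat.ceil_lt_add_one (le_of_lt (lt_trans one_pos hNζ))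
    linarith
  have hR2N : (R:ℝ)^2 ≤ 4 * N := by
    have h1 : ((N:ℝ)^ζ)^(2:ℕ) = (N:ℝ)^(ζ*2) := by
      rw [← Real.rpow_natCast ((N:ℝ)^ζ) 2, ← Real.rpow_mul (le_of_lt hN0)]
      norm_num
    have h2 : (N:ℝ)^(ζ*2) ≤ (N:ℝ)^(1:ℝ) := by
      apply Real.rpow_le_rpow_of_exponent_le hN1 (by linarith)
    calc (R:ℝ)^2 ≤ (2*(N:ℝ)^ζ)^2 := by gcongr <;> positivity
      _ = 4 * ((N:ℝ)^ζ)^(2:ℕ) := by ring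
      _ ≤ 4 * (N:ℝ)^(1:ℝ) := by rw [h1]; linarith
      _ = 4 * N := by rw [Real.rpow_one]
  have hπ := Real.pi_pos
  -- key pointwise lower bounds
  have key : ∀ k : ℕ, 1 ≤ k → k ≤ N →
      γ*c*(k:ℝ)^2/48 ≤ (4 * γ / ((1/(N:ℝ)) ^ 2 * (R : ℝ) ^ 3)) *
            ∑ j ∈ Finset.Icc 1 R, c * Real.sin (π * k * (1/(N:ℝ)) * j / 2) ^ 2 ∨
      γ*c*(N:ℝ)^2/(R:ℝ)^2 ≤ (4 * γ / ((1/(N:ℝ)) ^ 2 * (R : ℝ) ^ 3)) *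
            ∑ j ∈ Finset.Icc 1 R, c * Real.sin (π * k * (1/(N:ℝ)) * j / 2) ^ 2 := by
    intro k hk1 hkN
    have hk0 : (0:ℝ) < k := by exact_mod_cast hk1
    have hkNr : (k:ℝ) ≤ N := by exact_mod_cast hkN
    set x : ℝ := (k:ℝ) * (1/(N:ℝ)) with hxdef
    have hx0 : 0 < x := by positivity
    have hx1 : x ≤ 1 := by rw [hxdef]; rw [mul_one_div, div_le_one hN0]; exact hkNr
    have hsum_eq : ∑ j ∈ Finset.Icc 1 R, c * Real.sin (π * k * (1/(N:ℝ)) * j / 2) ^ 2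
        = c * ∑ j ∈ Finset.Icc 1 R, Real.sin (π * x * j / 2) ^ 2 := by
      rw [Finset.mul_sum]
      apply Finset.sum_congr rfl
      intro j _
      congr 3
      rw [hxdef]; ring
    rw [hsum_eq]
    by_cases hcase : (k:ℝ) * R ≤ 2 * N
    · -- small k
      left
      set m : ℕ := min R (N/k) with hmdef
      have hm1 : 1 ≤ m := by
        apply le_min (by omega)
        rw [Nat.one_le_div_iff (by omega)]
        exact hkN
      have hmR : m ≤ R := min_le_left _ _
      have hjle : ∀ j : ℕ, j ≤ m → x * j ≤ 1 := by
        intro j hj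
        have hjk : j * k ≤ N := by
          rw [← Nat.le_div_iff_mul_le (by omega)]
          exact le_trans hj (min_le_right _ _)
        have hjkr : (k:ℝ) * j ≤ N := by
          have : (j:ℝ) * k ≤ N := by exact_mod_cast hjk
          linarith
        rw [hxdef]
        rw [mul_one_div, div_mul_eq_mul_div, div_le_one hN0]
        exact hjkr
      have hlow := sumSinSqSmall x R m hx0 hm1 hmR hjle
      -- m ≥ R/4
      have hm4 : (R:ℝ) ≤ 4 * m := by
        rcases le_or_gt R (N/k) with hle | hlt
        · have : m = R := min_eq_left hle
          rw [this]; linarith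
        · have hmeq : m = N/k := min_eq_right (le_of_lt hlt)
          have hdm := Nat.div_add_mod N k
          have hmod : N % k < k := Nat.mod_lt _ (by omega)
          have hd1 : 1 ≤ N / k := by rw [Nat.one_le_div_iff (by omega)]; exact hkN
          have e1 : (k:ℝ) * (↑(N/k)) + ↑(N % k) = N := by exact_mod_cast hdm
          have e2 : (↑(N % k):ℝ) ≤ (k:ℝ) - 1 := by
            have : N % k + 1 ≤ k := hmod
            have := (Nat.cast_le (α := ℝ)).2 this
            push_cast at this; linarith
          have e3 : (1:ℝ) ≤ ↑(N/k) := by exact_mod_cast hd1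
          rw [hmeq]
          nlinarith [mul_nonneg hk0.le (sub_nonneg.2 e3)]
      have hm0 : (0:ℝ) ≤ m := by positivity
      have hcube : ((R:ℝ)/4)^3 ≤ (m:ℝ)^3 := by
        apply pow_le_pow_left₀ (by positivity) (by linarith)
      calc γ*c*(k:ℝ)^2/48
          = (4 * γ / ((1/(N:ℝ)) ^ 2 * (R : ℝ) ^ 3)) * (c * (x^2 * ((R:ℝ)/4)^3 / 3)) := by
            rw [hxdef]; field_simp; ring
        _ ≤ (4 * γ / ((1/(N:ℝ)) ^ 2 * (R : ℝ) ^ 3)) * (c * (x^2 * (m:ℝ)^3 / 3)) := by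
            gcongr
        _ ≤ (4 * γ / ((1/(N:ℝ)) ^ 2 * (R : ℝ) ^ 3)) *
              (c * ∑ j ∈ Finset.Icc 1 R, Real.sin (π * x * j / 2) ^ 2) := by
            gcongr
    · -- large k
      right
      push_neg at hcase
      have hxR : 2 ≤ x * R := by
        rw [hxdef, mul_one_div, div_mul_eq_mul_div, le_div_iff₀ hN0]
        linarith
      have hlow := sumSinSqLarge x R hx0 hx1 hxR
      calc γ*c*(N:ℝ)^2/(R:ℝ)^2
          = (4 * γ / ((1/(N:ℝ)) ^ 2 * (R : ℝ) ^ 3)) * (c * ((R:ℝ)/4)) := by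
            field_simp
        _ ≤ (4 * γ / ((1/(N:ℝ)) ^ 2 * (R : ℝ) ^ 3)) *
              (c * ∑ j ∈ Finset.Icc 1 R, Real.sin (π * x * j / 2) ^ 2) := by
            gcongr
  constructor
  · intro k hk1 hkN
    rcases key k hk1 hkN with hb | hb
    · have hk0 : (0:ℝ) < k := by exact_mod_cast hk1
      calc (0:ℝ) < γ*c*(k:ℝ)^2/48 := by positivity
        _ ≤ _ := hb
    · calc (0:ℝ) < γ*c*(N:ℝ)^2/(R:ℝ)^2 := by positivity
        _ ≤ _ := hb
  · -- the sum bound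
    have hptw : ∀ k ∈ Finset.Icc 1 N,
        ((4 * γ / ((1/(N:ℝ)) ^ 2 * (R : ℝ) ^ 3)) *
            ∑ j ∈ Finset.Icc 1 R, c * Real.sin (π * k * (1/(N:ℝ)) * j / 2) ^ 2)⁻¹
          ≤ 48/(γ*c) * ((k:ℝ)^2)⁻¹ + (R:ℝ)^2/(γ*c*(N:ℝ)^2) := by
      intro k hk
      simp only [Finset.mem_Icc] at hk
      have hk0 : (0:ℝ) < k := by exact_mod_cast hk.1
      rcases key k hk.1 hk.2 with hb | hb
      · have h1 : ((4 * γ / ((1/(N:ℝ)) ^ 2 * (R : ℝ) ^ 3)) *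
            ∑ j ∈ Finset.Icc 1 R, c * Real.sin (π * k * (1/(N:ℝ)) * j / 2) ^ 2)⁻¹
            ≤ (γ*c*(k:ℝ)^2/48)⁻¹ := by
          apply inv_anti₀ (by positivity) hb
        have h2 : (γ*c*(k:ℝ)^2/48)⁻¹ = 48/(γ*c) * ((k:ℝ)^2)⁻¹ := by
          rw [inv_div]
          field_simp
        have h3 : (0:ℝ) ≤ (R:ℝ)^2/(γ*c*(N:ℝ)^2) := by positivity
        rw [h2] at h1
        linarith
      · have h1 : ((4 * γ / ((1/(N:ℝ)) ^ 2 * (R : ℝ) ^ 3)) *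
            ∑ j ∈ Finset.Icc 1 R, c * Real.sin (π * k * (1/(N:ℝ)) * j / 2) ^ 2)⁻¹
            ≤ (γ*c*(N:ℝ)^2/(R:ℝ)^2)⁻¹ := by
          apply inv_anti₀ (by positivity) hb
        have h2 : (γ*c*(N:ℝ)^2/(R:ℝ)^2)⁻¹ = (R:ℝ)^2/(γ*c*(N:ℝ)^2) := inv_div _ _
        have h3 : (0:ℝ) ≤ 48/(γ*c) * ((k:ℝ)^2)⁻¹ := by positivity
        rw [h2] at h1
        linarith
    calc ∑ k ∈ Finset.Icc 1 N,
          ((4 * γ / ((1/(N:ℝ)) ^ 2 * (R : ℝ) ^ 3)) *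
            ∑ j ∈ Finset.Icc 1 R, c * Real.sin (π * k * (1/(N:ℝ)) * j / 2) ^ 2)⁻¹
        ≤ ∑ k ∈ Finset.Icc 1 N, (48/(γ*c) * ((k:ℝ)^2)⁻¹ + (R:ℝ)^2/(γ*c*(N:ℝ)^2)) :=
          Finset.sum_le_sum hptw
      _ = 48/(γ*c) * (∑ k ∈ Finset.Icc 1 N, ((k:ℝ)^2)⁻¹) + N * ((R:ℝ)^2/(γ*c*(N:ℝ)^2)) := by
          rw [Finset.sum_add_distrib, Finset.sum_const, Nat.card_Icc, ← Finset.mul_sum]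
          simp [nsmul_eq_mul]
      _ ≤ 48/(γ*c) * 2 + N * ((R:ℝ)^2/(γ*c*(N:ℝ)^2)) := by
          have hb := baselBound N (by omega)
          have h4 : ∑ k ∈ Finset.Icc 1 N, ((k:ℝ)^2)⁻¹ ≤ 2 := by
            have : (0:ℝ) < 1/(N:ℝ) := by positivity
            linarith
          have h5 := mul_le_mul_of_nonneg_left h4 (by positivity : (0:ℝ) ≤ 48/(γ*c))
          linarith
      _ ≤ 48/(γ*c) * 2 + 4/(γ*c) := by
          have h6 : (N:ℝ) * ((R:ℝ)^2/(γ*c*(N:ℝ)^2)) ≤ 4/(γ*c) := by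
            rw [mul_div_assoc', div_le_div_iff₀ (by positivity) (by positivity)]
            nlinarith [mul_le_mul_of_nonneg_left hR2N
              (le_of_lt (by positivity : (0:ℝ) < (N:ℝ)*(γ*c))), mul_pos hγ hc]
          linarith
      _ ≤ 100 / (γ * c) := by
          apply le_of_eq
          ring
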